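/- Let γ > 0 and v = (B, w, z) with 0 < B < 1 and w, z ∈ ℝ². Then the 5×5 matrix A₀(v) with rows (γ/B + |z|², −z₁, −z₂, 0, 0), (−z₁, 1, 0, 0, 0), (−z₂, 0, 1, 0, 0), (0, 0, 0, B(1−B), 0), (0, 0, 0, 0, B(1−B)) is symmetric positive definite, and both products A₀(v)·Ã₁(v) and A₀(v)·Ã₂(v) are symmetric. That is, A₀(v) is a classical (Friedrichs) symmetrizer for the first-order part of the two-phase system in the variables (B, w, z). -/

import Mathlib

open Matrix

/-- The flux matrix `Ã₁(v)` of the two-phase system in the variables `v = (B, w, z)`. -/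
noncomputable def At1 (γ B w1 w2 z1 z2 : ℝ) : Matrix (Fin 5) (Fin 5) ℝ :=
  !![w1 + z1 * (1 - 2 * B), B, 0, B * (1 - B), 0;
     γ + z1 ^ 2 * (1 - 2 * B), w1 + B * z1, 0, 2 * B * z1 * (1 - B), 0;
     z1 * z2 * (1 - 2 * B), B * z2, w1, B * z2 * (1 - B), B * z1 * (1 - B);
     γ / B - z1 ^ 2, z1, 0, w1 + z1 * (1 - 2 * B), 0;
     -(z1 * z2), 0, z1, 0, w1 + z1 * (1 - 2 * B)]

/-- The flux matrix `Ã₂(v)` of the two-phase system in the variables `v = (B, w, z)`. -/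
noncomputable def At2 (γ B w1 w2 z1 z2 : ℝ) : Matrix (Fin 5) (Fin 5) ℝ :=
  !![w2 + z2 * (1 - 2 * B), 0, B, 0, B * (1 - B);
     z1 * z2 * (1 - 2 * B), w2, B * z1, B * z2 * (1 - B), B * z1 * (1 - B);
     γ + z2 ^ 2 * (1 - 2 * B), 0, w2 + B * z2, 0, 2 * B * z2 * (1 - B);
     -(z1 * z2), z2, 0, w2 + z2 * (1 - 2 * B), 0;
     γ / B - z2 ^ 2, 0, z2, 0, w2 + z2 * (1 - 2 * B)]

/-- The symbol `Ã(ξ, v) = ξ₁Ã₁(v) + ξ₂Ã₂(v)`. -/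
noncomputable def At (γ B w1 w2 z1 z2 ξ1 ξ2 : ℝ) : Matrix (Fin 5) (Fin 5) ℝ :=
  ξ1 • At1 γ B w1 w2 z1 z2 + ξ2 • At2 γ B w1 w2 z1 z2

set_option maxHeartbeats 2000000 in
/-- The matrix `A₀(v)` is a classical (Friedrichs) symmetrizer for the first-order part
of the two-phase system in the variables `(B, w, z)`: it is symmetric positive definite
and both `A₀(v)·Ã₁(v)` and `A₀(v)·Ã₂(v)` are symmetric. -/
theorem stmt5 (γ B w1 w2 z1 z2 : ℝ) (hγ : 0 < γ) (hB0 : 0 < B) (hB1 : B < 1) :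
    (!![γ / B + (z1 ^ 2 + z2 ^ 2), -z1, -z2, 0, 0;
        -z1, 1, 0, 0, 0;
        -z2, 0, 1, 0, 0;
        0, 0, 0, B * (1 - B), 0;
        0, 0, 0, 0, B * (1 - B)] : Matrix (Fin 5) (Fin 5) ℝ).PosDef ∧
    (!![γ / B + (z1 ^ 2 + z2 ^ 2), -z1, -z2, 0, 0;
        -z1, 1, 0, 0, 0;
        -z2, 0, 1, 0, 0;
        0, 0, 0, B * (1 - B), 0;
        0, 0, 0, 0, B * (1 - B)] * At1 γ B w1 w2 z1 z2).IsSymm ∧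
    (!![γ / B + (z1 ^ 2 + z2 ^ 2), -z1, -z2, 0, 0;
        -z1, 1, 0, 0, 0;
        -z2, 0, 1, 0, 0;
        0, 0, 0, B * (1 - B), 0;
        0, 0, 0, 0, B * (1 - B)] * At2 γ B w1 w2 z1 z2).IsSymm := by
  have hBne : B ≠ 0 := ne_of_gt hB0
  refine ⟨?_, ?_, ?_⟩
  · rw [Matrix.posDef_iff_dotProduct_mulVec]
    constructor
    · rw [Matrix.IsHermitian]
      ext i j
      fin_cases i <;> fin_cases j <;>
        simp [Matrix.conjTranspose_apply, Matrix.vecHead, Matrix.vecTail]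
    · intro x hx
      have hgB : 0 < γ / B := div_pos hγ hB0
      simp only [dotProduct, Matrix.mulVec, Fin.sum_univ_five,
        Matrix.cons_val', Matrix.cons_val_zero, Matrix.cons_val_one,
        Matrix.head_cons, Matrix.empty_val', Matrix.cons_val_fin_one,
        Matrix.head_fin_const, Matrix.cons_val_succ, RCLike.star_def,
        Pi.star_apply, star_trivial]
      have key : ∀ i : Fin 5, x i ≠ 0 → 0 <
          x 0 * ((γ / B + (z1 ^ 2 + z2 ^ 2)) * x 0 + -z1 * x 1 + -z2 * x 2 + 0 * x 3 + 0 * x 4) +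
          x 1 * (-z1 * x 0 + 1 * x 1 + 0 * x 2 + 0 * x 3 + 0 * x 4) +
          x 2 * (-z2 * x 0 + 0 * x 1 + 1 * x 2 + 0 * x 3 + 0 * x 4) +
          x 3 * (0 * x 0 + 0 * x 1 + 0 * x 2 + B * (1 - B) * x 3 + 0 * x 4) +
          x 4 * (0 * x 0 + 0 * x 1 + 0 * x 2 + 0 * x 3 + B * (1 - B) * x 4) := by
        intro i hi
        rcases eq_or_ne (x 0) 0 with h | h
        · fin_cases i <;> simp_all <;>
            nlinarith [mul_self_pos.mpr hi, mul_self_nonneg (x 1), mul_self_nonneg (x 2),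
              mul_nonneg (mul_pos hB0 (show (0:ℝ) < 1 - B by linarith)).le (mul_self_nonneg (x 3)),
              mul_nonneg (mul_pos hB0 (show (0:ℝ) < 1 - B by linarith)).le (mul_self_nonneg (x 4)),
              mul_pos (mul_pos hB0 (show (0:ℝ) < 1 - B by linarith)) (mul_self_pos.mpr hi)]
        · nlinarith [mul_pos hgB (mul_self_pos.mpr h), sq_nonneg (x 1 - z1 * x 0),
            sq_nonneg (x 2 - z2 * x 0),
            mul_nonneg (mul_pos hB0 (show (0:ℝ) < 1 - B by linarith)).le (mul_self_nonneg (x 3)),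
            mul_nonneg (mul_pos hB0 (show (0:ℝ) < 1 - B by linarith)).le (mul_self_nonneg (x 4))]
      obtain ⟨i, hi⟩ := Function.ne_iff.mp hx
      exact key i hi
  · rw [Matrix.IsSymm]
    ext i j
    fin_cases i <;> fin_cases j <;>
      simp [At1, Matrix.mul_apply, Fin.sum_univ_five, Matrix.transpose_apply,
        Matrix.vecHead, Matrix.vecTail]
    all_goals (try field_simp)
    all_goals ring
  · rw [Matrix.IsSymm]
    ext i j
    fin_cases i <;> fin_cases j <;>
      simp [At2, Matrix.mul_apply, Fin.sum_univ_five, Matrix.transpose_apply,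
        Matrix.vecHead, Matrix.vecTail]
    all_goals (try field_simp)
    all_goals ring
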